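/- Let N ≥ 3 be an integer, let λ : ℕ^N → ℕ^N be the shift map λ((x_1, x_2, …, x_N)) = (0, x_1, x_2, …, x_{N−1}), and let n be an integer with 2 ≤ n ≤ N. Then λ restricts to an injection from V_{n−1} into V_n, and moreover λ(R_{n−1}) ⊆ R_n and λ(R_{n−1}∖S_{n−1}) ⊆ R_n∖S_n. -/
import Mathlib


open Real

/-- The golden ratio `(1 + √5)/2`. -/
noncomputable def phiR : ℝ := (1 + Real.sqrt 5) / 2

/-- `mmax p q n = max(h_n·log p, h_{n-1}·log q)`, the logarithmic Mahler measure
of `p^{h_n}/q^{h_{n-1}}` for distinct primes `p`, `q`, where `h` is Fibonacci. -/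
noncomputable def mmax (p q n : ℕ) : ℝ :=
  max ((Nat.fib n : ℝ) * Real.log p) ((Nat.fib (n - 1) : ℝ) * Real.log q)

/-- `gmax n = max(h_n, φ·h_{n-1})`. -/
noncomputable def gmax (n : ℕ) : ℝ :=
  max (Nat.fib n : ℝ) (phiR * (Nat.fib (n - 1) : ℝ))

/-- The equation defining `t_n(p,q)`:
`m(p^{h_n}/q^{h_{n-1}})^t = m(p^{h_{n-1}}/q^{h_{n-2}})^t + m(p^{h_{n-2}}/q^{h_{n-3}})^t`. -/
def peq (p q n : ℕ) (t : ℝ) : Prop :=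
  mmax p q n ^ t = mmax p q (n - 1) ^ t + mmax p q (n - 2) ^ t

/-- The equation defining `s_n`:
`max(h_n, φ h_{n-1})^t = max(h_{n-1}, φ h_{n-2})^t + max(h_{n-2}, φ h_{n-3})^t`. -/
def geq (n : ℕ) (t : ℝ) : Prop :=
  gmax n ^ t = gmax (n - 1) ^ t + gmax (n - 2) ^ t

/-- Condition (W) on a pair of primes `(p,q)` relative to `N`. -/
def CondW (N p q : ℕ) : Prop :=
  ((Nat.fib N : ℝ) / Nat.fib (N - 1) < Real.log q / Real.log p ∧
    Real.log q / Real.log p < (Nat.fib (N - 1) : ℝ) / Nat.fib (N - 2)) ∨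
  ((Nat.fib (N - 1) : ℝ) / Nat.fib (N - 2) < Real.log q / Real.log p ∧
    Real.log q / Real.log p < (Nat.fib N : ℝ) / Nat.fib (N - 1))

/-- `V_n`: vectors `x ∈ ℕ^N` (1-based entry `i` is `x ⟨i-1⟩`) with
`Σ x_i h_i = h_n` and `Σ x_i h_{i-1} = h_{n-1}`. -/
def Vset (N n : ℕ) : Set (Fin N → ℕ) :=
  {x | ∑ i, x i * Nat.fib ((i : ℕ) + 1) = Nat.fib n ∧
       ∑ i, x i * Nat.fib (i : ℕ) = Nat.fib (n - 1)}

/-- The measure function `f_x(t) = (Σ_{i=1}^N x_i·max(h_i log p, h_{i-1} log q)^t)^{1/t}`. -/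
noncomputable def fmeas (N p q : ℕ) (x : Fin N → ℕ) (t : ℝ) : ℝ :=
  (∑ i, (x i : ℝ) * mmax p q ((i : ℕ) + 1) ^ t) ^ (1 / t)

/-- `x_n(i)`: the vector whose (i−2)nd (1-based) entry is `h_{n+1−i}`, whose
(i−1)st entry is `h_{n+2−i}`, and whose other entries are 0.  (For `i = 2`, `n = 1`
this gives `x_1(2) = (1,0,…,0)`.) -/
def xvec (N n i : ℕ) : Fin N → ℕ := fun j =>
  if (j : ℕ) + 3 = i then Nat.fib (n + 1 - i)
  else if (j : ℕ) + 2 = i then Nat.fib (n + 2 - i)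
  else 0

/-- `S_n = {x_n(i) : 3 ≤ i ≤ n+1}` for `n ≥ 2`, and `S_1 = {x_1(2)}`. -/
def Sset (N n : ℕ) : Set (Fin N → ℕ) :=
  if n = 1 then {xvec N 1 2}
  else {x | ∃ i, 3 ≤ i ∧ i ≤ n + 1 ∧ x = xvec N n i}

/-- `z` is almost consecutive-free: `z_j·z_{j+1} ≠ 0` implies `z_i = 0` for all `i > j+1`. -/
def ACF (N : ℕ) (z : Fin N → ℕ) : Prop :=
  ∀ (j : Fin N) (hj : (j : ℕ) + 1 < N),
    z j * z ⟨(j : ℕ) + 1, hj⟩ ≠ 0 → ∀ i : Fin N, (j : ℕ) + 1 < (i : ℕ) → z i = 0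

/-- `C_n`: the almost consecutive-free elements of `V_n`. -/
def Cset (N n : ℕ) : Set (Fin N → ℕ) := {z ∈ Vset N n | ACF N z}

/-- A factorization of `z ∈ V_n`: a `K`-tuple `x` with `x k ∈ V_{idx k}`,
`1 ≤ idx k ≤ n`, and `z = Σ_k x k`. -/
def IsFactorization (N n : ℕ) (z : Fin N → ℕ) {K : ℕ}
    (idx : Fin K → ℕ) (x : Fin K → Fin N → ℕ) : Prop :=
  (∀ k, 1 ≤ idx k ∧ idx k ≤ n ∧ x k ∈ Vset N (idx k)) ∧ z = ∑ k, x k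

/-- A tuple is `S`-type if each component lies in `∪_{i=1}^n S_i`. -/
def STypeFac (N n : ℕ) {K : ℕ} (x : Fin K → Fin N → ℕ) : Prop :=
  ∀ k, ∃ i, 1 ≤ i ∧ i ≤ n ∧ x k ∈ Sset N i

/-- `z` is `S`-restricted: every non-trivial (i.e. `K ≠ 1`) factorization is `S`-type. -/
def SRestricted (N n : ℕ) (z : Fin N → ℕ) : Prop :=
  ∀ (K : ℕ) (idx : Fin K → ℕ) (x : Fin K → Fin N → ℕ),
    IsFactorization N n z idx x → K ≠ 1 → STypeFac N n x

/-- `R_n`: the `S`-restricted elements of `C_n`. -/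
def Rset (N n : ℕ) : Set (Fin N → ℕ) := {z ∈ Cset N n | SRestricted N n z}

/-- The infimum attaining set `U_x = {t > 0 : f_x(t) = min{f_y(t) : y ∈ V_j}}`. -/
def Uset (N p q j : ℕ) (x : Fin N → ℕ) : Set ℝ :=
  {t | 0 < t ∧ IsLeast ((fun y => fmeas N p q y t) '' Vset N j) (fmeas N p q x t)}

/-- The shift map `λ((x_1,…,x_N)) = (0,x_1,…,x_{N-1})`. -/
def shiftMap (N : ℕ) (x : Fin N → ℕ) : Fin N → ℕ := fun j =>
  if (j : ℕ) = 0 then 0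
  else x ⟨(j : ℕ) - 1, lt_of_le_of_lt (Nat.sub_le _ _) j.isLt⟩


section Helpers

lemma shift_zero (M : ℕ) (x : Fin (M+1) → ℕ) : shiftMap (M+1) x 0 = 0 := by
  simp [shiftMap]

lemma shift_succ (M : ℕ) (x : Fin (M+1) → ℕ) (j : Fin M) :
    shiftMap (M+1) x j.succ = x j.castSucc := by
  simp only [shiftMap, Fin.val_succ, Nat.add_sub_cancel]
  rw [if_neg (by omega)]
  rfl

lemma sum_shift_fib1 (M : ℕ) (x : Fin (M+1) → ℕ) :
    ∑ j, shiftMap (M+1) x j * Nat.fib ((j:ℕ)+1)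
      = ∑ j : Fin M, x j.castSucc * Nat.fib ((j:ℕ)+2) := by
  rw [Fin.sum_univ_succ]
  simp [shift_succ, shift_zero]

lemma sum_shift_fib0 (M : ℕ) (x : Fin (M+1) → ℕ) :
    ∑ j, shiftMap (M+1) x j * Nat.fib (j:ℕ)
      = ∑ j : Fin M, x j.castSucc * Nat.fib ((j:ℕ)+1) := by
  rw [Fin.sum_univ_succ]
  simp [shift_succ, shift_zero]

end Helpers

section Helpers2

lemma last_zero (M m : ℕ) (hM : 2 ≤ M) (hm : m ≤ M) (x : Fin (M+1) → ℕ)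
    (hx : x ∈ Vset (M+1) m) : x (Fin.last M) = 0 := by
  have h1 := hx.1
  have hterm : x (Fin.last M) * Nat.fib ((Fin.last M : ℕ) + 1)
      ≤ ∑ i, x i * Nat.fib ((i:ℕ)+1) :=
    Finset.single_le_sum (f := fun i : Fin (M+1) => x i * Nat.fib ((i:ℕ)+1))
      (fun i _ => Nat.zero_le _) (Finset.mem_univ _)
  rw [h1, Fin.val_last] at hterm
  have hlt : Nat.fib m < Nat.fib (M+1) :=
    lt_of_le_of_lt (Nat.fib_mono hm) (Nat.fib_lt_fib_succ (by omega))
  by_contra h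
  have h1' : 1 ≤ x (Fin.last M) := Nat.one_le_iff_ne_zero.2 h
  have : Nat.fib (M+1) ≤ x (Fin.last M) * Nat.fib (M+1) := Nat.le_mul_of_pos_left _ h1'
  omega

lemma shift_mem_V (M m : ℕ) (hM : 2 ≤ M) (hm : 1 ≤ m) (hmM : m ≤ M)
    (x : Fin (M+1) → ℕ) (hx : x ∈ Vset (M+1) m) :
    shiftMap (M+1) x ∈ Vset (M+1) (m+1) := by
  have hlast := last_zero M m hM hmM x hx
  obtain ⟨h1, h2⟩ := hx
  rw [Fin.sum_univ_castSucc] at h1 h2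
  rw [hlast, zero_mul, add_zero] at h1 h2
  simp only [Fin.coe_castSucc] at h1 h2
  constructor
  · rw [sum_shift_fib1]
    have key : ∀ j : Fin M, x j.castSucc * Nat.fib ((j:ℕ)+2)
        = x j.castSucc * Nat.fib ((j:ℕ)+1) + x j.castSucc * Nat.fib (j:ℕ) := by
      intro j
      rw [Nat.fib_add_two, Nat.mul_add, Nat.add_comm (x j.castSucc * Nat.fib _)]
    rw [Finset.sum_congr rfl (fun j _ => key j), Finset.sum_add_distrib, h1, h2]
    have hfib : Nat.fib (m+1) = Nat.fib m + Nat.fib (m-1) := by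
      have := Nat.fib_add_two (n := m - 1)
      have e1 : m - 1 + 2 = m + 1 := by omega
      have e2 : m - 1 + 1 = m := by omega
      rw [e1, e2] at this
      omega
    omega
  · rw [sum_shift_fib0]
    have e : m + 1 - 1 = m := by omega
    rw [e, h1]

lemma unshift_V (M m : ℕ) (hm : 2 ≤ m) (x : Fin (M+1) → ℕ)
    (hx : x ∈ Vset (M+1) m) (h0 : x 0 = 0) :
    ∃ y, y ∈ Vset (M+1) (m-1) ∧ x = shiftMap (M+1) y ∧ y (Fin.last M) = 0 := by
  classical
  obtain ⟨h1, h2⟩ := hx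
  rw [Fin.sum_univ_succ] at h1 h2
  rw [h0, zero_mul, zero_add] at h1 h2
  simp only [Fin.val_succ] at h1 h2
  refine ⟨fun j => if h : (j:ℕ) < M then x (Fin.succ ⟨(j:ℕ), h⟩) else 0, ?_, ?_, ?_⟩
  · constructor
    · rw [Fin.sum_univ_castSucc]
      simp only [Fin.val_last, Fin.coe_castSucc]
      rw [dif_neg (lt_irrefl M), zero_mul, add_zero]
      have hcast : (∑ j : Fin M,
          (if h : (j:ℕ) < M then x (Fin.succ ⟨(j:ℕ), h⟩) else 0) * Nat.fib ((j:ℕ)+1))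
          = ∑ j : Fin M, x j.succ * Nat.fib ((j:ℕ)+1) :=
        Finset.sum_congr rfl (fun j _ => by rw [dif_pos j.isLt, Fin.eta])
      rw [hcast]
      exact h2
    · rw [Fin.sum_univ_castSucc]
      simp only [Fin.val_last, Fin.coe_castSucc]
      rw [dif_neg (lt_irrefl M), zero_mul, add_zero]
      have hcast : (∑ j : Fin M,
          (if h : (j:ℕ) < M then x (Fin.succ ⟨(j:ℕ), h⟩) else 0) * Nat.fib ((j:ℕ)))
          = ∑ j : Fin M, x j.succ * Nat.fib ((j:ℕ)) :=
        Finset.sum_congr rfl (fun j _ => by rw [dif_pos j.isLt, Fin.eta])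
      rw [hcast]
      have key : ∀ j : Fin M, x j.succ * Nat.fib ((j:ℕ)+1+1)
          = x j.succ * Nat.fib ((j:ℕ)+1) + x j.succ * Nat.fib (j:ℕ) := by
        intro j
        rw [Nat.fib_add_two, Nat.mul_add, Nat.add_comm (x j.succ * Nat.fib _)]
      rw [Finset.sum_congr rfl (fun j _ => key j), Finset.sum_add_distrib] at h1
      have hfib : Nat.fib m = Nat.fib (m-1) + Nat.fib (m-2) := by
        have := Nat.fib_add_two (n := m - 2)
        have e1 : m - 2 + 2 = m := by omega
        have e2 : m - 2 + 1 = m - 1 := by omega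
        rw [e1, e2] at this
        omega
      have e3 : m - 1 - 1 = m - 2 := by omega
      rw [e3]
      omega
  · funext j
    rcases Nat.eq_zero_or_pos (j:ℕ) with hj | hj
    · have hj0 : j = 0 := Fin.ext hj
      rw [hj0, h0, shift_zero]
    · simp only [shiftMap]
      rw [if_neg (by omega), dif_pos (by omega)]
      apply congrArg x
      apply Fin.ext
      simp only [Fin.val_succ]
      omega
  · simp only [Fin.val_last]
    rw [dif_neg (lt_irrefl M)]

lemma V1_zero_ne (M : ℕ) (x : Fin (M+1) → ℕ) (hx : x ∈ Vset (M+1) 1) : x 0 ≠ 0 := by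
  obtain ⟨h1, h2⟩ := hx
  intro h0
  rw [Nat.fib_zero] at h2
  have hz : ∀ i ∈ (Finset.univ : Finset (Fin (M+1))), x i * Nat.fib ((i:ℕ)) = 0 :=
    Finset.sum_eq_zero_iff.1 h2
  have hsum : ∑ i : Fin (M+1), x i * Nat.fib ((i:ℕ)+1) = 0 := by
    apply Finset.sum_eq_zero
    intro i _
    rcases Nat.eq_zero_or_pos (i:ℕ) with hi | hi
    · have : i = 0 := Fin.ext hi
      rw [this, h0, zero_mul]
    · have hprod := hz i (Finset.mem_univ i)
      have hfib : 0 < Nat.fib (i:ℕ) := Nat.fib_pos.2 hi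
      have : x i = 0 := by
        rcases Nat.mul_eq_zero.1 hprod with h | h
        · exact h
        · omega
      rw [this, zero_mul]
  rw [h1, Nat.fib_one] at hsum
  omega

end Helpers2

section Helpers3

lemma shift_xvec (M m i : ℕ) (hi : 3 ≤ i) :
    shiftMap (M+1) (xvec (M+1) m i) = xvec (M+1) (m+1) (i+1) := by
  funext j
  rcases Nat.eq_zero_or_pos (j:ℕ) with h0 | hpos
  · simp only [shiftMap, xvec, h0]
    split_ifs <;> first | rfl | (exfalso; omega) | (congr 1; omega)
  · simp only [shiftMap, xvec]
    rw [if_neg (by omega)]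
    split_ifs <;> first | rfl | (exfalso; omega) | (congr 1; omega)

lemma shift_xvec12 (M : ℕ) :
    shiftMap (M+1) (xvec (M+1) 1 2) = xvec (M+1) 2 3 := by
  funext j
  rcases Nat.eq_zero_or_pos (j:ℕ) with h0 | hpos
  · simp only [shiftMap, xvec, h0]
    split_ifs <;> first | rfl | (exfalso; omega) | (congr 1; omega)
  · simp only [shiftMap, xvec]
    rw [if_neg (by omega)]
    split_ifs <;> first | rfl | (exfalso; omega) | (congr 1; omega)

lemma shift_S (M m : ℕ) (hm : 1 ≤ m) (y : Fin (M+1) → ℕ) (hy : y ∈ Sset (M+1) m) :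
    shiftMap (M+1) y ∈ Sset (M+1) (m+1) := by
  by_cases h1 : m = 1
  · subst h1
    rw [Sset, if_pos rfl, Set.mem_singleton_iff] at hy
    rw [hy, shift_xvec12, Sset, if_neg (by omega)]
    exact ⟨3, by omega, by omega, rfl⟩
  · rw [Sset, if_neg h1] at hy
    obtain ⟨i, hi3, him, hyx⟩ := hy
    rw [hyx, shift_xvec M m i hi3, Sset, if_neg (by omega)]
    exact ⟨i+1, by omega, by omega, rfl⟩

lemma unshift_S (M n : ℕ) (hM : 2 ≤ M) (hn : 2 ≤ n) (hnN : n ≤ M+1)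
    (z : Fin (M+1) → ℕ) (hz : z ∈ Vset (M+1) (n-1))
    (hS : shiftMap (M+1) z ∈ Sset (M+1) n) : z ∈ Sset (M+1) (n-1) := by
  rw [Sset, if_neg (by omega)] at hS
  obtain ⟨i, hi3, hin, hxe⟩ := hS
  have hzlast : z (Fin.last M) = 0 := last_zero M (n-1) hM (by omega) z hz
  have hni : 4 ≤ i ∨ (i = 3 ∧ n = 2) := by
    by_cases h : i = 3
    · right
      refine ⟨h, ?_⟩
      have h00 := congrFun hxe 0
      rw [shift_zero] at h00
      simp only [xvec, h, Fin.val_zero] at h00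
      rw [if_pos trivial] at h00
      have : n + 1 - 3 = 0 := Nat.fib_eq_zero.1 h00.symm
      omega
    · left; omega
  have hzeq : z = xvec (M+1) (n-1) (i-1) := by
    funext j
    by_cases hj : (j:ℕ) < M
    · have hc := congrFun hxe ⟨(j:ℕ)+1, by omega⟩
      simp only [shiftMap] at hc
      rw [if_neg (by simp)] at hc
      simp only [Nat.add_sub_cancel, Fin.eta] at hc
      rw [hc]
      simp only [xvec]
      split_ifs <;> first | rfl | (exfalso; omega) | (congr 1; omega)
    · have hjM : j = Fin.last M := Fin.ext (by simp [Fin.val_last]; omega)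
      rw [hjM, hzlast]
      simp only [xvec, Fin.val_last]
      rw [if_neg (by omega), if_neg (by omega)]
  by_cases h2 : n = 2
  · subst h2
    rw [Sset, if_pos rfl, Set.mem_singleton_iff]
    have : i = 3 := by omega
    rw [hzeq, this]
  · rw [Sset, if_neg (by omega)]
    exact ⟨i-1, by omega, by omega, hzeq⟩

end Helpers3

section Helpers4

lemma shift_ACF (M : ℕ) (z : Fin (M+1) → ℕ) (hz : ACF (M+1) z) :
    ACF (M+1) (shiftMap (M+1) z) := by
  intro j hj hne i hi
  rcases Nat.eq_zero_or_pos (j:ℕ) with h0 | hpos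
  · exfalso
    apply hne
    have hzer : shiftMap (M+1) z j = 0 := by
      simp only [shiftMap]
      rw [if_pos h0]
    rw [hzer, zero_mul]
  · obtain ⟨jn, hjn⟩ : ∃ jn, (j:ℕ) = jn + 1 := ⟨(j:ℕ)-1, by omega⟩
    have hjnM : jn < M + 1 := by omega
    have hjn2 : jn + 1 < M + 1 := by omega
    have e1 : shiftMap (M+1) z j = z ⟨jn, hjnM⟩ := by
      simp only [shiftMap]
      rw [if_neg (by omega)]
      apply congrArg z
      apply Fin.ext
      simp only []
      omega
    have e2 : shiftMap (M+1) z ⟨(j:ℕ)+1, hj⟩ = z ⟨jn+1, hjn2⟩ := by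
      simp only [shiftMap]
      rw [if_neg (by simp)]
      apply congrArg z
      apply Fin.ext
      simp only []
      omega
    rw [e1, e2] at hne
    have hall := hz ⟨jn, hjnM⟩ hjn2 hne
    obtain ⟨im, him⟩ : ∃ im, (i:ℕ) = im + 1 := ⟨(i:ℕ)-1, by omega⟩
    have himM : im < M + 1 := by omega
    have e3 : shiftMap (M+1) z i = z ⟨im, himM⟩ := by
      simp only [shiftMap]
      rw [if_neg (by omega)]
      apply congrArg z
      apply Fin.ext
      simp only []
      omega
    rw [e3]
    exact hall ⟨im, himM⟩ (show jn + 1 < im by omega)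

end Helpers4

/-- for `N ≥ 3` and `2 ≤ n ≤ N`, the shift map
`λ((x_1,…,x_N)) = (0,x_1,…,x_{N-1})` restricts to an injection from `V_{n-1}` into `V_n`,
and `λ(R_{n-1}) ⊆ R_n` and `λ(R_{n-1} \ S_{n-1}) ⊆ R_n \ S_n`. -/
theorem stmt19 (N n : ℕ) (hN : 3 ≤ N) (h2n : 2 ≤ n) (hnN : n ≤ N) :
    (∀ x ∈ Vset N (n - 1), shiftMap N x ∈ Vset N n) ∧
    Set.InjOn (shiftMap N) (Vset N (n - 1)) ∧
    shiftMap N '' Rset N (n - 1) ⊆ Rset N n ∧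
    shiftMap N '' (Rset N (n - 1) \ Sset N (n - 1)) ⊆ Rset N n \ Sset N n := by
  obtain ⟨M, rfl⟩ : ∃ M, N = M + 1 := ⟨N - 1, by omega⟩
  have hM : 2 ≤ M := by omega
  have hn1 : n - 1 + 1 = n := by omega
  -- Part 1
  have part1 : ∀ x ∈ Vset (M+1) (n - 1), shiftMap (M+1) x ∈ Vset (M+1) n := by
    intro x hx
    have := shift_mem_V M (n-1) hM (by omega) (by omega) x hx
    rwa [hn1] at this
  -- Part 2
  have part2 : Set.InjOn (shiftMap (M+1)) (Vset (M+1) (n - 1)) := by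
    intro x hx y hy h
    funext j
    by_cases hj : (j:ℕ) < M
    · have := congrFun h ⟨(j:ℕ)+1, by omega⟩
      simp only [shiftMap] at this
      rw [if_neg (by simp), if_neg (by simp)] at this
      simp only [Nat.add_sub_cancel, Fin.eta] at this
      exact this
    · have hjM : j = Fin.last M := Fin.ext (by simp [Fin.val_last]; omega)
      rw [hjM, last_zero M (n-1) hM (by omega) x hx, last_zero M (n-1) hM (by omega) y hy]
  -- Part 3
  have part3 : shiftMap (M+1) '' Rset (M+1) (n - 1) ⊆ Rset (M+1) n := by
    rintro w ⟨z, ⟨⟨hzV, hzACF⟩, hzS⟩, rfl⟩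
    refine ⟨⟨part1 z hzV, ?_⟩, ?_⟩
    · -- ACF
      exact shift_ACF M z hzACF
    · -- SRestricted
      intro K idx x hfac hK
      obtain ⟨hcomp, hsum⟩ := hfac
      have h0 : ∀ k, x k 0 = 0 := by
        have hs0 : ∑ k, x k 0 = 0 := by
          have hc := congrFun hsum 0
          rw [shift_zero, Finset.sum_apply] at hc
          exact hc.symm
        intro k
        exact Finset.sum_eq_zero_iff.1 hs0 k (Finset.mem_univ k)
      have hidx2 : ∀ k, 2 ≤ idx k := by
        intro k
        obtain ⟨hk1, hk2, hkV⟩ := hcomp k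
        by_contra h
        have : idx k = 1 := by omega
        rw [this] at hkV
        exact V1_zero_ne M (x k) hkV (h0 k)
      choose y hyV hyx hylast using fun k =>
        unshift_V M (idx k) (hidx2 k) (x k) (hcomp k).2.2 (h0 k)
      have hzsum : z = ∑ k, y k := by
        funext j
        by_cases hj : (j:ℕ) < M
        · have hc := congrFun hsum ⟨(j:ℕ)+1, by omega⟩
          simp only [shiftMap] at hc
          rw [if_neg (by simp)] at hc
          simp only [Nat.add_sub_cancel, Fin.eta] at hc
          rw [hc, Finset.sum_apply, Finset.sum_apply]
          apply Finset.sum_congr rfl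
          intro k _
          rw [hyx k]
          simp only [shiftMap]
          rw [if_neg (by simp)]
          simp only [Nat.add_sub_cancel, Fin.eta]
        · have hjM : j = Fin.last M := Fin.ext (by simp [Fin.val_last]; omega)
          rw [hjM, last_zero M (n-1) hM (by omega) z hzV, Finset.sum_apply]
          symm
          apply Finset.sum_eq_zero
          intro k _
          exact hylast k
      have hfac' : IsFactorization (M+1) (n-1) z (fun k => idx k - 1) y := by
        constructor
        · intro k
          have hg2 := hidx2 k
          have hg3 := (hcomp k).2.1
          refine ⟨?_, ?_, hyV k⟩
          · show 1 ≤ idx k - 1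
            omega
          · show idx k - 1 ≤ n - 1
            omega
        · exact hzsum
      have hst := hzS K (fun k => idx k - 1) y hfac' hK
      intro k
      obtain ⟨i, hi1, hi2, hiS⟩ := hst k
      refine ⟨i + 1, by omega, by omega, ?_⟩
      rw [hyx k]
      exact shift_S M i hi1 (y k) hiS
  -- Part 4
  refine ⟨part1, part2, part3, ?_⟩
  rintro w ⟨z, ⟨hzR, hzns⟩, rfl⟩
  refine ⟨part3 ⟨z, hzR, rfl⟩, ?_⟩
  intro hmem
  exact hzns (unshift_S M n hM h2n hnN z hzR.1.1 hmem)
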